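/- arXiv:1610.07163 — 5 statements merged into one kernel-verified Lean document; each statement's English description precedes it below -/
import Mathlib

section
/- Let N : (0, R] → [0, ∞) be a differentiable function satisfying the differential inequality N'(r) ≥ −(2/r) N(r)(1 + N(r)) for all r ∈ (0, R]. Then for all 0 < s ≤ r ≤ R: N(r) ≥ N(s) (s/r)² / (1 + N(s)(1 − (s/r)²)). -/
theorem stmt_5 (R : ℝ) (hR : 0 < R) (N N' : ℝ → ℝ)
    (hN0 : ∀ r ∈ Set.Ioc (0:ℝ) R, 0 ≤ N r)
    (hderiv : ∀ r ∈ Set.Ioc (0:ℝ) R, HasDerivAt N (N' r) r)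
    (hineq : ∀ r ∈ Set.Ioc (0:ℝ) R, -(2 / r) * N r * (1 + N r) ≤ N' r) :
    ∀ s r : ℝ, 0 < s → s ≤ r → r ≤ R →
      N s * (s / r) ^ 2 / (1 + N s * (1 - (s / r) ^ 2)) ≤ N r := by
  intro s r hs hsr hrR
  have hsI : s ∈ Set.Ioc (0:ℝ) R := ⟨hs, hsr.trans hrR⟩
  have hrI : r ∈ Set.Ioc (0:ℝ) R := ⟨hs.trans_le hsr, hrR⟩
  have hr : (0:ℝ) < r := hrI.1
  set F : ℝ → ℝ := fun x => x ^ 2 * (N x / (1 + N x)) with hFdef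
  have hpos : ∀ x ∈ Set.Ioc (0:ℝ) R, (0:ℝ) < 1 + N x := fun x hx => by
    linarith [hN0 x hx]
  have hFd : ∀ x ∈ Set.Ioc (0:ℝ) R, HasDerivAt F
      (2 * x * (N x / (1 + N x)) +
        x ^ 2 * ((N' x * (1 + N x) - N x * N' x) / (1 + N x) ^ 2)) x := by
    intro x hx
    have h1 : HasDerivAt (fun y => N y / (1 + N y))
        ((N' x * (1 + N x) - N x * N' x) / (1 + N x) ^ 2) x :=
      (hderiv x hx).div ((hderiv x hx).const_add 1) (ne_of_gt (hpos x hx))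
    have h2 : HasDerivAt (fun y : ℝ => y ^ 2) (2 * x) x := by
      simpa using (hasDerivAt_pow 2 x)
    have := h2.mul h1
    exact this
  have hsub : Set.Icc s r ⊆ Set.Ioc (0:ℝ) R := fun x hx =>
    ⟨hs.trans_le hx.1, hx.2.trans hrR⟩
  have hmono : MonotoneOn F (Set.Icc s r) := by
    apply monotoneOn_of_deriv_nonneg (convex_Icc s r)
    · exact fun x hx => ((hFd x (hsub hx)).continuousAt).continuousWithinAt
    · intro x hx
      rw [interior_Icc] at hx
      exact ((hFd x (hsub ⟨hx.1.le, hx.2.le⟩)).differentiableAt).differentiableWithinAt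
    · intro x hx
      rw [interior_Icc] at hx
      have hxI : x ∈ Set.Ioc (0:ℝ) R := hsub ⟨hx.1.le, hx.2.le⟩
      rw [(hFd x hxI).deriv]
      have hx0 : (0:ℝ) < x := hxI.1
      have hN := hN0 x hxI
      have hD := hpos x hxI
      have hi := hineq x hxI
      have key : -(2 / x) * N x * (1 + N x) * x = -(2 * N x * (1 + N x)) := by
        field_simp
      have hi2 : -(2 * N x * (1 + N x)) ≤ N' x * x := by
        rw [← key]
        exact mul_le_mul_of_nonneg_right hi hx0.le
      have hsimp : N' x * (1 + N x) - N x * N' x = N' x := by ring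
      have heq : 2 * x * (N x / (1 + N x)) + x ^ 2 * (N' x / (1 + N x) ^ 2)
          = (2 * x * N x * (1 + N x) + x ^ 2 * N' x) / (1 + N x) ^ 2 := by
        field_simp
      rw [hsimp, heq]
      apply div_nonneg _ (by positivity)
      nlinarith [mul_le_mul_of_nonneg_left hi2 hx0.le]
  have hFsr : F s ≤ F r := hmono (Set.left_mem_Icc.2 hsr) (Set.right_mem_Icc.2 hsr) hsr
  have hDs := hpos s hsI
  have hDr := hpos r hrI
  have hNs := hN0 s hsI
  have hNr := hN0 r hrI
  have hkey : N s * s ^ 2 * (1 + N r) ≤ N r * r ^ 2 * (1 + N s) := by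
    have := hFsr
    simp only [hFdef] at this
    rw [show s ^ 2 * (N s / (1 + N s)) = N s * s ^ 2 / (1 + N s) from by ring,
        show r ^ 2 * (N r / (1 + N r)) = N r * r ^ 2 / (1 + N r) from by ring,
        div_le_div_iff₀ hDs hDr] at this
    exact this
  have hp : (s / r) ^ 2 ≤ 1 := by
    rw [div_pow]
    rw [div_le_one (by positivity)]
    nlinarith
  have hden : (0:ℝ) < 1 + N s * (1 - (s / r) ^ 2) := by nlinarith
  rw [div_le_iff₀ hden]
  have hpr : (s / r) ^ 2 * r ^ 2 = s ^ 2 := by field_simp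
  have hpr2 : N s * ((s / r) ^ 2 * r ^ 2) = N s * s ^ 2 := by rw [hpr]
  have hpr3 : N s * N r * ((s / r) ^ 2 * r ^ 2) = N s * N r * s ^ 2 := by rw [hpr]
  have h3 : (N s * (s / r) ^ 2) * r ^ 2 ≤ (N r * (1 + N s * (1 - (s / r) ^ 2))) * r ^ 2 := by
    nlinarith [hkey, hpr2, hpr3]
  exact le_of_mul_le_mul_right h3 (by positivity)
end

section
/- Let N : (0, R] → [0, ∞) be differentiable with N'(r) ≥ −(2/r) N(r)(1 + N(r)). Fix r ∈ (0, R] and δ ∈ (0, 1) with N(r) ≤ δ. Then for all s with √(2δ/(1+2δ)) · r < s ≤ r, one has N(s) ≤ 2δ (r/s)². -/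
theorem stmt_6 (R : ℝ) (hR : 0 < R) (N N' : ℝ → ℝ)
    (hN0 : ∀ r ∈ Set.Ioc (0:ℝ) R, 0 ≤ N r)
    (hderiv : ∀ r ∈ Set.Ioc (0:ℝ) R, HasDerivAt N (N' r) r)
    (hineq : ∀ r ∈ Set.Ioc (0:ℝ) R, -(2 / r) * N r * (1 + N r) ≤ N' r)
    (r : ℝ) (hr : r ∈ Set.Ioc (0:ℝ) R)
    (δ : ℝ) (hδ : δ ∈ Set.Ioo (0:ℝ) 1) (hNr : N r ≤ δ) :
    ∀ s : ℝ, Real.sqrt (2 * δ / (1 + 2 * δ)) * r < s → s ≤ r →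
      N s ≤ 2 * δ * (r / s) ^ 2 := by
  intro s hs1 hs2
  obtain ⟨hr0, hrR⟩ := hr
  obtain ⟨hδ0, hδ1⟩ := hδ
  have hs0 : 0 < s := lt_trans (by positivity) hs1
  set f : ℝ → ℝ := fun x => x ^ 2 * (N x / (1 + N x)) with hf
  have hmem : ∀ x : ℝ, s ≤ x → x ≤ r → x ∈ Set.Ioc (0:ℝ) R :=
    fun x h1 h2 => ⟨lt_of_lt_of_le hs0 h1, h2.trans hrR⟩
  have hD : ∀ x ∈ Set.Ioc (0:ℝ) R,
      HasDerivAt f (2 * x * (N x / (1 + N x)) + x ^ 2 * (N' x / (1 + N x) ^ 2)) x := by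
    intro x hx
    have h1 : (0:ℝ) < 1 + N x := by linarith [hN0 x hx]
    have hNd := hderiv x hx
    have hdiv : HasDerivAt (fun y => N y / (1 + N y)) (N' x / (1 + N x) ^ 2) x := by
      have := hNd.div ((hasDerivAt_const x (1:ℝ)).add hNd) h1.ne'
      refine this.congr_deriv ?_
      simp only [Pi.add_apply]
      ring
    have := (hasDerivAt_pow 2 x).mul hdiv
    refine this.congr_deriv ?_
    norm_num
  have hmono : f s ≤ f r := by
    have hcont : ContinuousOn f (Set.Icc s r) := fun x hx =>
      ((hD x (hmem x hx.1 hx.2)).continuousAt).continuousWithinAt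
    have hmonoOn : MonotoneOn f (Set.Icc s r) := by
      apply monotoneOn_of_deriv_nonneg (convex_Icc s r) hcont
      · rw [interior_Icc]
        intro x hx
        exact ((hD x (hmem x hx.1.le hx.2.le)).differentiableAt).differentiableWithinAt
      · rw [interior_Icc]
        intro x hx
        have hx' := hmem x hx.1.le hx.2.le
        rw [(hD x hx').deriv]
        have hx0 : 0 < x := hx'.1
        have hn0 : 0 ≤ N x := hN0 x hx'
        have h1 : (0:ℝ) < 1 + N x := by linarith
        have hq := hineq x hx'
        have h3 : x ^ 2 * (-(2 / x) * N x * (1 + N x)) ≤ x ^ 2 * N' x :=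
          mul_le_mul_of_nonneg_left hq (by positivity)
        have h4 : x ^ 2 * (-(2 / x) * N x * (1 + N x)) = -(2 * x * N x * (1 + N x)) := by
          field_simp
        have h5 : 2 * x * (N x / (1 + N x)) + x ^ 2 * (N' x / (1 + N x) ^ 2)
            = (2 * x * N x * (1 + N x) + x ^ 2 * N' x) / (1 + N x) ^ 2 := by
          field_simp
        rw [h5]
        apply div_nonneg _ (by positivity)
        linarith [h3, h4]
    exact hmonoOn ⟨le_refl s, hs2⟩ ⟨hs2, le_refl r⟩ hs2
  -- positivity facts
  have hnr0 : 0 ≤ N r := hN0 r ⟨hr0, hrR⟩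
  have hns0 : 0 ≤ N s := hN0 s (hmem s le_rfl hs2)
  have h1s : (0:ℝ) < 1 + N s := by linarith
  have h1r : (0:ℝ) < 1 + N r := by linarith
  -- from sqrt inequality
  have ha : (0:ℝ) ≤ 2 * δ / (1 + 2 * δ) := by positivity
  have hsq : 2 * δ / (1 + 2 * δ) * r ^ 2 < s ^ 2 := by
    have h := mul_self_lt_mul_self (by positivity : (0:ℝ) ≤ Real.sqrt (2 * δ / (1 + 2 * δ)) * r) hs1
    have h2 := Real.mul_self_sqrt ha
    nlinarith [h, h2]
  have ht2 : 2 * δ * r ^ 2 < (1 + 2 * δ) * s ^ 2 := by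
    rw [div_mul_eq_mul_div, div_lt_iff₀ (by positivity : (0:ℝ) < 1 + 2 * δ)] at hsq
    nlinarith [hsq]
  -- clear denominators in hmono
  have key : N s * s ^ 2 * (1 + N r) ≤ N r * r ^ 2 * (1 + N s) := by
    have h := mul_le_mul_of_nonneg_right hmono (by positivity : (0:ℝ) ≤ (1 + N s) * (1 + N r))
    have e1 : f s * ((1 + N s) * (1 + N r)) = N s * s ^ 2 * (1 + N r) := by
      simp only [hf]; field_simp
    have e2 : f r * ((1 + N s) * (1 + N r)) = N r * r ^ 2 * (1 + N s) := by
      simp only [hf]; field_simp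
    rw [e1, e2] at h
    exact h
  have E4 : N s * s ^ 2 * (1 + δ) ≤ δ * (1 + N s) * r ^ 2 := by
    have h5 : N s * s ^ 2 * (1 + δ) * (1 + N r) ≤ δ * (1 + N s) * r ^ 2 * (1 + N r) := by
      have hA := mul_le_mul_of_nonneg_right key (by positivity : (0:ℝ) ≤ 1 + δ)
      have hB : N r * (1 + δ) ≤ δ * (1 + N r) := by nlinarith
      have hC := mul_le_mul_of_nonneg_right hB (by positivity : (0:ℝ) ≤ r ^ 2 * (1 + N s))
      nlinarith [hA, hC]
    exact le_of_mul_le_mul_right h5 h1r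
  have hgoal : N s * s ^ 2 ≤ 2 * δ * r ^ 2 := by nlinarith [ht2, E4, hns0]
  rw [div_pow, ← mul_div_assoc, le_div_iff₀ (by positivity : (0:ℝ) < s ^ 2)]
  nlinarith [hgoal]
end

section
/- Let N, K : (0, R] → ℝ be differentiable with N ≥ 0, K > 0, and K'(r) = N(r)K(r)/r. Fix μ ∈ (0, 1/100) and suppose N satisfies N'(r) ≥ −(2/r)N(r)(1+N(r)). If r ∈ (0, R] with N(r) ≤ 1, then N(s) ≤ N(r)/(1−μ)⁵ for all s ∈ [(1−μ)r, r], and consequently the weighted average N̄(r) = (π/2)∫₀¹ sin(πτ) N((1−τμ)r) dτ satisfies N̄(r) ≤ N(r)/(1−μ)⁵. -/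
set_option maxHeartbeats 1000000 in
theorem stmt_7 (R : ℝ) (hR : 0 < R) (N N' K : ℝ → ℝ)
    (hN0 : ∀ r ∈ Set.Ioc (0:ℝ) R, 0 ≤ N r)
    (hKpos : ∀ r ∈ Set.Ioc (0:ℝ) R, 0 < K r)
    (hKode : ∀ r ∈ Set.Ioc (0:ℝ) R, HasDerivAt K (N r * K r / r) r)
    (hderiv : ∀ r ∈ Set.Ioc (0:ℝ) R, HasDerivAt N (N' r) r)
    (hineq : ∀ r ∈ Set.Ioc (0:ℝ) R, -(2 / r) * N r * (1 + N r) ≤ N' r)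
    (μ : ℝ) (hμ : μ ∈ Set.Ioo (0:ℝ) (1/100))
    (r : ℝ) (hr : r ∈ Set.Ioc (0:ℝ) R) (hNr : N r ≤ 1) :
    (∀ s : ℝ, (1 - μ) * r ≤ s → s ≤ r → N s ≤ N r / (1 - μ) ^ 5) ∧
      (Real.pi / 2) * ∫ t in (0:ℝ)..1, Real.sin (Real.pi * t) * N ((1 - t * μ) * r)
        ≤ N r / (1 - μ) ^ 5 := by
  obtain ⟨hr0, hrR⟩ := hr
  obtain ⟨hμ0, hμ1⟩ := hμ
  have hμlt : μ < 1 := by linarith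
  have h1μ : (0:ℝ) < 1 - μ := by linarith
  have hpow : (0:ℝ) < (1 - μ) ^ 5 := by positivity
  have hsub : Set.Icc ((1 - μ) * r) r ⊆ Set.Ioc (0:ℝ) R := by
    intro s hs
    exact ⟨lt_of_lt_of_le (by positivity) hs.1, le_trans hs.2 hrR⟩
  -- the monotone quantity φ(s) = s² N(s)/(1+N(s))
  set φ : ℝ → ℝ := fun s => s ^ 2 * N s / (1 + N s) with hφdef
  have hφderiv : ∀ s ∈ Set.Ioc (0:ℝ) R, HasDerivAt φ
      (((2 * s ^ 1 * N s + s ^ 2 * N' s) * (1 + N s) - s ^ 2 * N s * N' s) / (1 + N s) ^ 2) s := by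
    intro s hs
    have hNs := hN0 s hs
    have hne : (1 + N s) ≠ 0 := by linarith
    have h1 : HasDerivAt (fun s => s ^ 2 * N s) (2 * s ^ 1 * N s + s ^ 2 * N' s) s := by
      exact ((hasDerivAt_pow 2 s).mul (hderiv s hs)).congr_deriv (by simp)
    have h2 : HasDerivAt (fun s => 1 + N s) (N' s) s := by
      exact ((hasDerivAt_const s 1).add (hderiv s hs)).congr_deriv (by simp)
    exact h1.div h2 hne
  have hφnonneg : ∀ s ∈ Set.Ioc (0:ℝ) R,
      0 ≤ ((2 * s ^ 1 * N s + s ^ 2 * N' s) * (1 + N s) - s ^ 2 * N s * N' s) / (1 + N s) ^ 2 := by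
    intro s hs
    have hNs := hN0 s hs
    have hi := hineq s hs
    have hs0 := hs.1
    apply div_nonneg _ (sq_nonneg _)
    have key : s ^ 2 * (-(2 / s) * N s * (1 + N s)) ≤ s ^ 2 * N' s :=
      mul_le_mul_of_nonneg_left hi (sq_nonneg s)
    have key2 : -(2 * s * N s * (1 + N s)) ≤ s ^ 2 * N' s := by
      have hsne : s ≠ 0 := ne_of_gt hs0
      calc -(2 * s * N s * (1 + N s)) = s ^ 2 * (-(2 / s) * N s * (1 + N s)) := by
            field_simp
        _ ≤ s ^ 2 * N' s := key
    nlinarith [key2]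
  have hmono : MonotoneOn φ (Set.Icc ((1 - μ) * r) r) := by
    apply monotoneOn_of_deriv_nonneg (convex_Icc _ _)
    · intro s hs
      exact ((hφderiv s (hsub hs)).continuousAt).continuousWithinAt
    · intro s hs
      have hs' : s ∈ Set.Icc ((1 - μ) * r) r := interior_subset hs
      exact ((hφderiv s (hsub hs')).differentiableAt).differentiableWithinAt
    · intro s hs
      have hs' : s ∈ Set.Icc ((1 - μ) * r) r := interior_subset hs
      rw [(hφderiv s (hsub hs')).deriv]
      exact hφnonneg s (hsub hs')
  have hrmem : r ∈ Set.Icc ((1 - μ) * r) r := ⟨by nlinarith, le_refl r⟩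
  have hmain : ∀ s : ℝ, (1 - μ) * r ≤ s → s ≤ r → N s ≤ N r / (1 - μ) ^ 5 := by
    intro s h1s h2s
    have hsm : s ∈ Set.Icc ((1 - μ) * r) r := ⟨h1s, h2s⟩
    have hsI := hsub hsm
    have hφle : φ s ≤ φ r := hmono hsm hrmem h2s
    have hs0 : 0 < s := hsI.1
    have hn0 : 0 ≤ N s := hN0 s hsI
    have ha0 : 0 ≤ N r := hN0 r ⟨hr0, hrR⟩
    have h1n : (0:ℝ) < 1 + N s := by linarith
    have h1a : (0:ℝ) < 1 + N r := by linarith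
    simp only [hφdef] at hφle
    rw [div_le_div_iff₀ h1n h1a] at hφle
    -- hφle : s^2 * N s * (1 + N r) ≤ r^2 * N r * (1 + N s)
    have hsq : ((1 - μ) * r) ^ 2 ≤ s ^ 2 := pow_le_pow_left₀ (by positivity) h1s 2
    have hclear : ((1 - μ) * r) ^ 2 * N s * (1 + N r) ≤ r ^ 2 * (N r * (1 + N s)) := by
      nlinarith [mul_nonneg hn0 h1a.le]
    have h2 : N s * ((1 - μ) ^ 2 * (1 + N r) - N r) ≤ N r := by
      nlinarith [mul_pos hr0 hr0]
    have hpoly : (1 - μ) ^ 5 ≤ 1 - 4 * μ + 2 * μ ^ 2 := by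
      nlinarith [mul_pos hμ0 hμ0, mul_pos (mul_pos hμ0 hμ0) hμ0,
        mul_pos (mul_pos (mul_pos hμ0 hμ0) hμ0) hμ0]
    have hkey : 0 ≤ (1 - N r) * (μ * (2 - μ)) :=
      mul_nonneg (by linarith) (by nlinarith)
    have hd : (1 - μ) ^ 5 ≤ (1 - μ) ^ 2 * (1 + N r) - N r := by nlinarith [hkey, hpoly]
    rw [le_div_iff₀ hpow]
    have hstep := mul_le_mul_of_nonneg_left hd hn0
    linarith [h2, hstep]
  refine ⟨hmain, ?_⟩
  -- integral part
  have hπ : (0:ℝ) < Real.pi := Real.pi_pos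
  set B := N r / (1 - μ) ^ 5 with hBdef
  have hmaps : ∀ t ∈ Set.Icc (0:ℝ) 1, (1 - t * μ) * r ∈ Set.Icc ((1 - μ) * r) r := by
    intro t ht
    obtain ⟨ht0, ht1⟩ := ht
    refine Set.mem_Icc.mpr ⟨?_, ?_⟩
    · nlinarith [mul_nonneg (mul_nonneg hμ0.le (by linarith : (0:ℝ) ≤ 1 - t)) hr0.le]
    · nlinarith [mul_nonneg (mul_nonneg ht0 hμ0.le) hr0.le]
  have hcontf : ContinuousOn (fun t => Real.sin (Real.pi * t) * N ((1 - t * μ) * r))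
      (Set.Icc (0:ℝ) 1) := by
    apply ContinuousOn.mul
    · exact (Real.continuous_sin.comp (continuous_const.mul continuous_id)).continuousOn
    · apply ContinuousOn.comp (t := Set.Icc ((1 - μ) * r) r)
      · intro s hs
        exact ((hderiv s (hsub hs)).continuousAt).continuousWithinAt
      · exact ((continuous_const.sub (continuous_id.mul continuous_const)).mul
          continuous_const).continuousOn
      · exact hmaps
  have hint1 : IntervalIntegrable (fun t => Real.sin (Real.pi * t) * N ((1 - t * μ) * r))
      MeasureTheory.volume 0 1 := by
    apply ContinuousOn.intervalIntegrable
    rwa [Set.uIcc_of_le (by norm_num : (0:ℝ) ≤ 1)]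
  have hint2 : IntervalIntegrable (fun t => Real.sin (Real.pi * t) * B)
      MeasureTheory.volume 0 1 :=
    (((Real.continuous_sin.comp (continuous_const.mul continuous_id)).mul
      continuous_const).intervalIntegrable 0 1)
  have hptle : ∀ t ∈ Set.Icc (0:ℝ) 1,
      Real.sin (Real.pi * t) * N ((1 - t * μ) * r) ≤ Real.sin (Real.pi * t) * B := by
    intro t ht
    have hsin : 0 ≤ Real.sin (Real.pi * t) := by
      apply Real.sin_nonneg_of_nonneg_of_le_pi
      · nlinarith [ht.1]
      · nlinarith [ht.2]
    have hNle : N ((1 - t * μ) * r) ≤ B := hmain _ (hmaps t ht).1 (hmaps t ht).2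
    exact mul_le_mul_of_nonneg_left hNle hsin
  have hIle := intervalIntegral.integral_mono_on (by norm_num : (0:ℝ) ≤ 1) hint1 hint2 hptle
  have hsinint : (∫ t in (0:ℝ)..1, Real.sin (Real.pi * t)) = 2 / Real.pi := by
    have hder : ∀ t ∈ Set.uIcc (0:ℝ) 1,
        HasDerivAt (fun t => -Real.cos (Real.pi * t) / Real.pi) (Real.sin (Real.pi * t)) t := by
      intro t _
      have h1 : HasDerivAt (fun t : ℝ => Real.pi * t) Real.pi t := by
        simpa using (hasDerivAt_id t).const_mul Real.pi
      have h2 := (Real.hasDerivAt_cos (Real.pi * t)).comp t h1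
      have h3 := (h2.neg).div_const Real.pi
      exact h3.congr_deriv (by field_simp)
    rw [intervalIntegral.integral_eq_sub_of_hasDerivAt hder
      ((Real.continuous_sin.comp (continuous_const.mul continuous_id)).intervalIntegrable 0 1)]
    simp [Real.cos_pi]
    field_simp
    ring
  have hintB : (∫ t in (0:ℝ)..1, Real.sin (Real.pi * t) * B) = 2 / Real.pi * B := by
    rw [intervalIntegral.integral_mul_const, hsinint]
  rw [hintB] at hIle
  have := mul_le_mul_of_nonneg_left hIle (by positivity : (0:ℝ) ≤ Real.pi / 2)
  calc Real.pi / 2 * ∫ t in (0:ℝ)..1, Real.sin (Real.pi * t) * N ((1 - t * μ) * r)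
      ≤ Real.pi / 2 * (2 / Real.pi * B) := this
    _ = B := by field_simp
end

section
/- Let N : (0, R] → [0, ∞) be differentiable with N'(r) ≥ −(2/r)N(r)(1+N(r)), fix μ ∈ (0, 1/100), and define N̄(r) = (π/2)∫₀¹ sin(πτ) N((1−τμ)r) dτ. If r ∈ (0, R] and N̄(r) ≤ 1, then N((1−μ)r) ≤ N̄(r)/(1−μ)⁵. -/
set_option maxHeartbeats 1000000 in
theorem stmt_8 (R : ℝ) (hR : 0 < R) (N N' : ℝ → ℝ)
    (hN0 : ∀ r ∈ Set.Ioc (0:ℝ) R, 0 ≤ N r)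
    (hderiv : ∀ r ∈ Set.Ioc (0:ℝ) R, HasDerivAt N (N' r) r)
    (hineq : ∀ r ∈ Set.Ioc (0:ℝ) R, -(2 / r) * N r * (1 + N r) ≤ N' r)
    (μ : ℝ) (hμ : μ ∈ Set.Ioo (0:ℝ) (1/100))
    (r : ℝ) (hr : r ∈ Set.Ioc (0:ℝ) R)
    (hNbar :
      (Real.pi / 2) * ∫ t in (0:ℝ)..1, Real.sin (Real.pi * t) * N ((1 - t * μ) * r) ≤ 1) :
    N ((1 - μ) * r)
      ≤ ((Real.pi / 2) * ∫ t in (0:ℝ)..1, Real.sin (Real.pi * t) * N ((1 - t * μ) * r))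
          / (1 - μ) ^ 5 := by
  obtain ⟨hr0, hrR⟩ := hr
  obtain ⟨hμ0, hμ1⟩ := hμ
  set v : ℝ := 1 - μ with hv
  have hv99 : (99:ℝ)/100 ≤ v := by rw [hv]; linarith
  have hv1 : v ≤ 1 := by rw [hv]; linarith
  have hv0 : 0 < v := by linarith
  set a : ℝ := v * r with ha
  have ha0 : 0 < a := mul_pos hv0 hr0
  have har : a ≤ r := by rw [ha]; nlinarith
  have hsub : Set.Icc a r ⊆ Set.Ioc 0 R := fun s hs =>
    ⟨lt_of_lt_of_le ha0 hs.1, le_trans hs.2 hrR⟩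
  have hNpos : ∀ s ∈ Set.Ioc (0:ℝ) R, 0 < 1 + N s := fun s hs => by linarith [hN0 s hs]
  -- the almost-monotone quantity G s = s² · N s / (1 + N s)
  set G : ℝ → ℝ := fun s => s ^ 2 * (N s / (1 + N s)) with hG
  have hGd : ∀ s ∈ Set.Ioc (0:ℝ) R, HasDerivAt G
      (2 * s * (N s / (1 + N s)) +
        s ^ 2 * ((N' s * (1 + N s) - N s * N' s) / (1 + N s) ^ 2)) s := by
    intro s hs
    have h1 : HasDerivAt (fun x : ℝ => x ^ 2) (2 * s) s := by
      simpa using (hasDerivAt_pow 2 s)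
    have h2 : HasDerivAt (fun x => N x / (1 + N x))
        ((N' s * (1 + N s) - N s * N' s) / (1 + N s) ^ 2) s :=
      (hderiv s hs).div ((hderiv s hs).const_add 1) (ne_of_gt (hNpos s hs))
    have := h1.mul h2
    exact this
  have hmono : MonotoneOn G (Set.Icc a r) := by
    apply monotoneOn_of_deriv_nonneg (convex_Icc a r)
    · intro s hs
      exact ((hGd s (hsub hs)).continuousAt).continuousWithinAt
    · intro s hs
      rw [interior_Icc] at hs
      exact ((hGd s (hsub (Set.Ioo_subset_Icc_self hs))).differentiableAt).differentiableWithinAt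
    · intro s hs
      rw [interior_Icc] at hs
      have hsm := hsub (Set.Ioo_subset_Icc_self hs)
      rw [(hGd s hsm).deriv]
      have hs0 : 0 < s := hsm.1
      have hN := hN0 s hsm
      have h1N := hNpos s hsm
      have hi := hineq s hsm
      have e1 : N' s * (1 + N s) - N s * N' s = N' s := by ring
      rw [e1]
      have key : -(2 * s) * (N s * (1 + N s)) ≤ s ^ 2 * N' s := by
        have h' := mul_le_mul_of_nonneg_left hi (le_of_lt (mul_pos hs0 hs0))
        calc -(2 * s) * (N s * (1 + N s))
            = (s * s) * (-(2 / s) * N s * (1 + N s)) := by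
              field_simp
          _ ≤ (s * s) * N' s := h'
          _ = s ^ 2 * N' s := by ring
      have e2 : 2 * s * (N s / (1 + N s)) + s ^ 2 * (N' s / (1 + N s) ^ 2)
          = (2 * s * (N s * (1 + N s)) + s ^ 2 * N' s) / (1 + N s) ^ 2 := by
        field_simp
      rw [e2]
      apply div_nonneg _ (sq_nonneg _)
      nlinarith
  set x : ℝ := N a with hx
  have hxm : a ∈ Set.Icc a r := ⟨le_refl a, har⟩
  have hx0 : 0 ≤ x := hN0 a (hsub hxm)
  have h1x : 0 < 1 + x := by linarith
  set D : ℝ := 1 + x - v ^ 2 * x with hD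
  have hv2le : v ^ 2 ≤ 1 := by nlinarith
  have hD0 : 0 < D := by
    rw [hD]
    nlinarith [mul_le_mul_of_nonneg_right hv2le hx0]
  set C : ℝ := v ^ 2 * x / D with hC
  have hC0 : 0 ≤ C := div_nonneg (by positivity) hD0.le
  have ha2 : a ^ 2 = v ^ 2 * r ^ 2 := by rw [ha]; ring
  have hCN : ∀ s ∈ Set.Icc a r, C ≤ N s := by
    intro s hs
    have hsm := hsub hs
    have hN := hN0 s hsm
    have h1N := hNpos s hsm
    have hGa := hmono hxm hs hs.1
    simp only [hG] at hGa
    have hs2 : s ^ 2 ≤ r ^ 2 := by nlinarith [hs.1, hs.2]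
    have h1 : a ^ 2 * (x / (1 + x)) ≤ r ^ 2 * (N s / (1 + N s)) :=
      le_trans hGa (mul_le_mul_of_nonneg_right hs2 (div_nonneg hN h1N.le))
    rw [← mul_div_assoc, ← mul_div_assoc] at h1
    have h2 := (div_le_div_iff₀ h1x h1N).mp h1
    rw [ha2] at h2
    have h2' : v ^ 2 * x * (1 + N s) ≤ N s * (1 + x) := by
      have hrr : (0:ℝ) < r ^ 2 := by positivity
      refine le_of_mul_le_mul_left ?_ hrr
      calc r ^ 2 * (v ^ 2 * x * (1 + N s)) = v ^ 2 * r ^ 2 * x * (1 + N s) := by ring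
        _ ≤ r ^ 2 * N s * (1 + x) := h2
        _ = r ^ 2 * (N s * (1 + x)) := by ring
    rw [hC, div_le_iff₀ hD0, hD]
    nlinarith [h2']
  -- continuity and integrability
  have hNcont : ContinuousOn N (Set.Ioc 0 R) := fun s hs =>
    ((hderiv s hs).continuousAt).continuousWithinAt
  have hφmaps : Set.MapsTo (fun t : ℝ => (1 - t * μ) * r) (Set.Icc 0 1) (Set.Icc a r) := by
    intro t ht
    obtain ⟨ht0, ht1⟩ := ht
    simp only [Set.mem_Icc]
    constructor
    · rw [ha, hv]
      nlinarith [mul_nonneg (mul_nonneg hμ0.le (sub_nonneg.2 ht1)) hr0.le]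
    · nlinarith [mul_nonneg (mul_nonneg ht0 hμ0.le) hr0.le]
  have hφcont : ContinuousOn (fun t : ℝ => (1 - t * μ) * r) (Set.Icc 0 1) := by
    fun_prop
  have hmcont : ContinuousOn (fun t => Real.sin (Real.pi * t) * N ((1 - t * μ) * r))
      (Set.Icc 0 1) := by
    apply ContinuousOn.mul
    · exact (Real.continuous_sin.comp (continuous_const.mul continuous_id)).continuousOn
    · exact ((hNcont.mono hsub).comp hφcont hφmaps)
  have hint1 : IntervalIntegrable (fun t => Real.sin (Real.pi * t) * N ((1 - t * μ) * r))
      MeasureTheory.volume 0 1 := by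
    apply ContinuousOn.intervalIntegrable
    rwa [Set.uIcc_of_le (by norm_num : (0:ℝ) ≤ 1)]
  have hint2 : IntervalIntegrable (fun t => Real.sin (Real.pi * t) * C)
      MeasureTheory.volume 0 1 := (Continuous.intervalIntegrable (by fun_prop) 0 1)
  have hmono2 : (∫ t in (0:ℝ)..1, Real.sin (Real.pi * t) * C)
      ≤ ∫ t in (0:ℝ)..1, Real.sin (Real.pi * t) * N ((1 - t * μ) * r) := by
    apply intervalIntegral.integral_mono_on (by norm_num) hint2 hint1
    intro t ht
    have hsin : 0 ≤ Real.sin (Real.pi * t) :=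
      Real.sin_nonneg_of_nonneg_of_le_pi (mul_nonneg Real.pi_pos.le ht.1)
        (mul_le_of_le_one_right Real.pi_pos.le ht.2)
    exact mul_le_mul_of_nonneg_left (hCN _ (hφmaps ht)) hsin
  have hπ := Real.pi_pos
  have hsint : (∫ t in (0:ℝ)..1, Real.sin (Real.pi * t)) = 2 / Real.pi := by
    rw [intervalIntegral.integral_comp_mul_left (fun x => Real.sin x) (ne_of_gt hπ)]
    simp [integral_sin]
    ring
  have hCle : C ≤ (Real.pi / 2) * ∫ t in (0:ℝ)..1, Real.sin (Real.pi * t) * N ((1 - t * μ) * r) := by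
    have hl : (∫ t in (0:ℝ)..1, Real.sin (Real.pi * t) * C)
        = (2 / Real.pi) * C := by
      rw [intervalIntegral.integral_mul_const, hsint]
    calc C = (Real.pi / 2) * ((2 / Real.pi) * C) := by field_simp
      _ = (Real.pi / 2) * ∫ t in (0:ℝ)..1, Real.sin (Real.pi * t) * C := by rw [hl]
      _ ≤ _ := mul_le_mul_of_nonneg_left hmono2 (by positivity)
  -- final arithmetic
  rw [le_div_iff₀ (by positivity : (0:ℝ) < v ^ 5)]
  have hC1 : C ≤ 1 := le_trans hCle hNbar
  have h2 : 2 * v ^ 2 * x ≤ 1 + x := by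
    have h3 := (div_le_one hD0).mp hC1
    rw [hD] at h3; linarith
  have hq : 0 ≤ v ^ 4 + v ^ 3 + v ^ 2 - v - 1 := by
    have hv2 : ((99:ℝ)/100) ^ 2 ≤ v ^ 2 := by nlinarith
    have hv3 : ((99:ℝ)/100) ^ 3 ≤ v ^ 3 := by nlinarith
    have hv4 : ((99:ℝ)/100) ^ 4 ≤ v ^ 4 := by nlinarith
    nlinarith
  have hv5 : v ^ 5 ≤ 2 * v ^ 2 - 1 := by
    nlinarith [mul_nonneg (sub_nonneg.2 hv1) hq]
  have h2v : (0:ℝ) < 2 * v ^ 2 - 1 := by nlinarith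
  have hxc : x * (2 * v ^ 2 - 1) ≤ 1 := by linarith
  have hv3D : v ^ 3 * D ≤ 1 := by
    have hnn : (0:ℝ) ≤ v ^ 3 * (1 - v ^ 2) := by nlinarith
    have hA := mul_le_mul_of_nonneg_left hxc hnn
    rw [hD]
    nlinarith [hA, hv5, h2v]
  have hfin : x * v ^ 5 ≤ C := by
    rw [hC, le_div_iff₀ hD0]
    nlinarith [mul_le_mul_of_nonneg_left hv3D (mul_nonneg (sq_nonneg v) hx0)]
  exact hfin.trans hCle
end

section
/- Let K : (0, R] → (0, ∞) satisfy r K'(r) = N(r) K(r) with N ≥ 0 continuous, and suppose 0 < s < r ≤ R and N(τ) ≥ N(s)(s/τ)²/(1 + N(s)(1 − (s/τ)²)) for all τ ∈ [s, r]. Then K(s)² N(s) ≤ (1/(1 − (s/r)²)) (K(r)² − K(s)²). -/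
theorem stmt_13 (R : ℝ) (K N : ℝ → ℝ) (s r : ℝ)
    (hs : 0 < s) (hsr : s < r) (hrR : r ≤ R)
    (hKpos : ∀ t ∈ Set.Ioc (0:ℝ) R, 0 < K t)
    (hN0 : ∀ t ∈ Set.Ioc (0:ℝ) R, 0 ≤ N t)
    (hNcont : ContinuousOn N (Set.Ioc (0:ℝ) R))
    (hODE : ∀ t ∈ Set.Ioc (0:ℝ) R, HasDerivAt K (N t * K t / t) t)
    (hlow : ∀ t ∈ Set.Icc s r,
      N s * (s / t) ^ 2 / (1 + N s * (1 - (s / t) ^ 2)) ≤ N t) :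
    K s ^ 2 * N s ≤ (1 / (1 - (s / r) ^ 2)) * (K r ^ 2 - K s ^ 2) := by
  have hsR : s ∈ Set.Ioc (0:ℝ) R := ⟨hs, by linarith⟩
  have hrRm : r ∈ Set.Ioc (0:ℝ) R := ⟨by linarith, hrR⟩
  set c := N s with hc
  have hNs : 0 ≤ c := hN0 s hsR
  set D : ℝ → ℝ := fun t => 1 + c * (1 - (s / t) ^ 2) with hD
  set H : ℝ → ℝ := fun t => K t ^ 2 / D t with hH
  -- D is at least 1 on [s, r]
  have hDge : ∀ t ∈ Set.Icc s r, 1 ≤ D t := by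
    intro t ht
    have hts : s ≤ t := ht.1
    have ht0 : 0 < t := lt_of_lt_of_le hs hts
    have h1 : (s / t) ^ 2 ≤ 1 := by
      have : s / t ≤ 1 := (div_le_one ht0).2 hts
      have h0 : 0 ≤ s / t := by positivity
      nlinarith
    have : 0 ≤ c * (1 - (s / t) ^ 2) := mul_nonneg hNs (by linarith)
    simp only [hD]; linarith
  -- derivative of H at each point of [s, r]
  have hderiv : ∀ t ∈ Set.Icc s r,
      HasDerivAt H (((2 * K t ^ 1 * (N t * K t / t)) * D t
        - K t ^ 2 * (c * (2 * s ^ 2 / t ^ 3))) / (D t) ^ 2) t := by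
    intro t ht
    have ht0 : 0 < t := lt_of_lt_of_le hs ht.1
    have htR : t ∈ Set.Ioc (0:ℝ) R := ⟨ht0, le_trans ht.2 hrR⟩
    have hF : HasDerivAt (fun x => K x ^ 2) (2 * K t ^ 1 * (N t * K t / t)) t := by
      simpa using (hODE t htR).fun_pow 2
    have h1 : HasDerivAt (fun x : ℝ => s / x) (s * (-(t ^ 2)⁻¹)) t := by
      simpa [div_eq_mul_inv] using (hasDerivAt_inv (ne_of_gt ht0)).const_mul s
    have h2 : HasDerivAt (fun x : ℝ => (s / x) ^ 2)
        (2 * (s / t) ^ 1 * (s * (-(t ^ 2)⁻¹))) t := h1.pow 2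
    have hq : HasDerivAt D (c * (2 * s ^ 2 / t ^ 3)) t := by
      have h3 : HasDerivAt (fun x : ℝ => 1 + c * (1 - (s / x) ^ 2))
          (c * (0 - 2 * (s / t) ^ 1 * (s * (-(t ^ 2)⁻¹)))) t :=
        (((hasDerivAt_const t (1:ℝ)).sub h2).const_mul c).const_add 1
      convert h3 using 1
      field_simp
      ring
    have hDpos : (0:ℝ) < D t := lt_of_lt_of_le one_pos (hDge t ht)
    exact hF.div hq (ne_of_gt hDpos)
  -- the derivative is nonnegative on [s, r]
  have hderiv_nonneg : ∀ t ∈ Set.Icc s r,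
      0 ≤ ((2 * K t ^ 1 * (N t * K t / t)) * D t
        - K t ^ 2 * (c * (2 * s ^ 2 / t ^ 3))) / (D t) ^ 2 := by
    intro t ht
    have ht0 : 0 < t := lt_of_lt_of_le hs ht.1
    have htR : t ∈ Set.Ioc (0:ℝ) R := ⟨ht0, le_trans ht.2 hrR⟩
    have hKt : 0 < K t := hKpos t htR
    have hDpos : (0:ℝ) < D t := lt_of_lt_of_le one_pos (hDge t ht)
    have hl := hlow t ht
    have hterm : c * (s / t) ^ 2 ≤ N t * D t := by
      rw [div_le_iff₀ hDpos] at hl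
      exact hl
    apply div_nonneg _ (sq_nonneg _)
    rw [sub_nonneg]
    have hst : (s / t) ^ 2 = s ^ 2 / t ^ 2 := by rw [div_pow]
    rw [hst] at hterm
    have ht2 : (0:ℝ) < t ^ 2 := by positivity
    have ht3 : (0:ℝ) < t ^ 3 := by positivity
    have hterm2 : c * s ^ 2 ≤ N t * D t * t ^ 2 := by
      have h := mul_le_mul_of_nonneg_right hterm (le_of_lt ht2)
      have e : s ^ 2 / t ^ 2 * t ^ 2 = s ^ 2 := div_mul_cancel₀ _ (ne_of_gt ht2)
      rw [mul_assoc, e] at h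
      exact h
    have expand1 : 2 * K t ^ 1 * (N t * K t / t) * D t
        = 2 * K t ^ 2 * (N t * D t * t ^ 2) / t ^ 3 := by
      field_simp
    have expand2 : K t ^ 2 * (c * (2 * s ^ 2 / t ^ 3))
        = 2 * K t ^ 2 * (c * s ^ 2) / t ^ 3 := by
      field_simp
    rw [expand1, expand2]
    have hKsq : (0:ℝ) ≤ 2 * K t ^ 2 := by positivity
    gcongr
  -- H is monotone, hence H s ≤ H r
  have hmono : H s ≤ H r := by
    have hcont : ContinuousOn H (Set.Icc s r) := fun t ht =>
      ((hderiv t ht).continuousAt).continuousWithinAt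
    have hdiff : ∀ t ∈ Set.Ioo s r, HasDerivAt H (((2 * K t ^ 1 * (N t * K t / t)) * D t
        - K t ^ 2 * (c * (2 * s ^ 2 / t ^ 3))) / (D t) ^ 2) t := fun t ht =>
      hderiv t (Set.mem_Icc_of_Ioo ht)
    have hmon : MonotoneOn H (Set.Icc s r) := by
      apply monotoneOn_of_deriv_nonneg (convex_Icc s r) hcont
      · intro t ht
        rw [interior_Icc] at ht
        exact ((hdiff t ht).differentiableAt).differentiableWithinAt
      · intro t ht
        rw [interior_Icc] at ht
        rw [(hdiff t ht).deriv]
        exact hderiv_nonneg t (Set.mem_Icc_of_Ioo ht)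
    exact hmon (Set.left_mem_Icc.2 (le_of_lt hsr)) (Set.right_mem_Icc.2 (le_of_lt hsr))
      (le_of_lt hsr)
  -- unfold H at s and r
  have hDs : D s = 1 := by
    simp only [hD]
    rw [div_self (ne_of_gt hs)]
    ring
  have hHs : H s = K s ^ 2 := by
    simp only [hH, hDs, div_one]
  have hDrpos : (0:ℝ) < D r := lt_of_lt_of_le one_pos
    (hDge r (Set.right_mem_Icc.2 (le_of_lt hsr)))
  have hkey : K s ^ 2 * D r ≤ K r ^ 2 := by
    rw [hHs] at hmono
    simp only [hH] at hmono
    calc K s ^ 2 * D r ≤ (K r ^ 2 / D r) * D r :=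
          mul_le_mul_of_nonneg_right hmono (le_of_lt hDrpos)
      _ = K r ^ 2 := div_mul_cancel₀ _ (ne_of_gt hDrpos)
  have hA : (0:ℝ) < 1 - (s / r) ^ 2 := by
    have hr0 : 0 < r := lt_trans hs hsr
    have h1 : s / r < 1 := (div_lt_one hr0).2 hsr
    have h0 : 0 ≤ s / r := by positivity
    nlinarith
  rw [one_div, ← div_eq_inv_mul, le_div_iff₀ hA]
  simp only [hD] at hkey
  nlinarith [hkey]
end
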